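/- For x ∈ (0,1), the function y ↦ ((1+y/2)ln(1+y/2) - (y/2)ln(y/2)) - ((x+y)ln(x+y) - x ln x - y ln y), defined on (0,∞), has a unique minimizer at y = x²/(2-2x), and its minimum value equals -( (2-x)ln 2 + (1-x)ln(1-x) - (2-x)ln(2-x) ). -/

import Mathlib

open Real

/-- For `x ∈ (0,1)`, `y ↦ 𝒰^SRWB(y) - U(x,y)` on `(0,∞)` has unique minimizer
`y = x²/(2-2x)` with minimum value `-I^SRWB(x)`. -/
theorem VSRWB_unique_min (x : ℝ) (hx : x ∈ Set.Ioo (0 : ℝ) 1) :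
    (∀ y ∈ Set.Ioi (0 : ℝ), y ≠ x ^ 2 / (2 - 2 * x) →
      (((1 + (x ^ 2 / (2 - 2 * x)) / 2) * log (1 + (x ^ 2 / (2 - 2 * x)) / 2)
          - ((x ^ 2 / (2 - 2 * x)) / 2) * log ((x ^ 2 / (2 - 2 * x)) / 2))
        - ((x + x ^ 2 / (2 - 2 * x)) * log (x + x ^ 2 / (2 - 2 * x)) - x * log x
          - (x ^ 2 / (2 - 2 * x)) * log (x ^ 2 / (2 - 2 * x))))
      < (((1 + y / 2) * log (1 + y / 2) - (y / 2) * log (y / 2))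
        - ((x + y) * log (x + y) - x * log x - y * log y))) ∧
    (((1 + (x ^ 2 / (2 - 2 * x)) / 2) * log (1 + (x ^ 2 / (2 - 2 * x)) / 2)
        - ((x ^ 2 / (2 - 2 * x)) / 2) * log ((x ^ 2 / (2 - 2 * x)) / 2))
      - ((x + x ^ 2 / (2 - 2 * x)) * log (x + x ^ 2 / (2 - 2 * x)) - x * log x
        - (x ^ 2 / (2 - 2 * x)) * log (x ^ 2 / (2 - 2 * x))))
      = -((2 - x) * log 2 + (1 - x) * log (1 - x) - (2 - x) * log (2 - x)) := by
  obtain ⟨hx0, hx1⟩ := hx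
  have h1x : (0:ℝ) < 1 - x := by linarith
  have h2x : (0:ℝ) < 2 - 2 * x := by linarith
  have h2mx : (0:ℝ) < 2 - x := by linarith
  set y₀ : ℝ := x ^ 2 / (2 - 2 * x) with hy₀def
  have hy₀ : 0 < y₀ := by positivity
  set f : ℝ → ℝ := fun y =>
    ((1 + y / 2) * log (1 + y / 2) - (y / 2) * log (y / 2))
      - ((x + y) * log (x + y) - x * log x - y * log y) with hf
  have hderiv : ∀ z : ℝ, 0 < z → HasDerivAt f
      ((1/2) * log (1 + z/2) - (1/2) * log (z/2) - log (x + z) + log z) z := by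
    intro z hz
    have hxz : 0 < x + z := by linarith
    have h1z : 0 < 1 + z / 2 := by linarith
    have hA : HasDerivAt (fun y : ℝ => (1 + y / 2) * log (1 + y / 2))
        ((log (1 + z/2) + 1) * (1/2)) z := by
      have h := (Real.hasDerivAt_mul_log (ne_of_gt h1z)).comp z
        (((hasDerivAt_id z).div_const 2).const_add 1)
      simpa [Function.comp_def] using h
    have hB : HasDerivAt (fun y : ℝ => (y / 2) * log (y / 2))
        ((log (z/2) + 1) * (1/2)) z := by
      have h := (Real.hasDerivAt_mul_log (x := z/2) (by positivity)).comp z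
        ((hasDerivAt_id z).div_const 2)
      simpa [Function.comp_def] using h
    have hC : HasDerivAt (fun y : ℝ => (x + y) * log (x + y))
        ((log (x + z) + 1) * 1) z := by
      have h := (Real.hasDerivAt_mul_log (ne_of_gt hxz)).comp z
        ((hasDerivAt_id z).const_add x)
      simpa [Function.comp_def] using h
    have hD : HasDerivAt (fun y : ℝ => y * log y) (log z + 1) z :=
      Real.hasDerivAt_mul_log (ne_of_gt hz)
    have h := (hA.sub hB).sub ((hC.sub_const (x * log x)).sub hD)
    refine h.congr_deriv ?_
    ring
  -- sign of the derivative
  have hgval : ∀ z : ℝ, 0 < z →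
      (1/2) * log (1 + z/2) - (1/2) * log (z/2) - log (x + z) + log z
        = (1/2) * (log (z * (2 + z)) - log ((x + z)^2)) := by
    intro z hz
    have hxz : 0 < x + z := by linarith
    rw [show (1:ℝ) + z/2 = (2 + z)/2 by ring,
      log_div (by positivity) (two_ne_zero),
      log_div (ne_of_gt hz) (two_ne_zero),
      log_mul (ne_of_gt hz) (by positivity),
      log_pow]
    push_cast
    ring
  have hgpos : ∀ z : ℝ, y₀ < z →
      0 < (1/2) * log (1 + z/2) - (1/2) * log (z/2) - log (x + z) + log z := by
    intro z hz
    have hz0 : 0 < z := lt_trans hy₀ hz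
    have hkey : x ^ 2 < z * (2 - 2 * x) := (div_lt_iff₀ h2x).mp hz
    have hlt : (x + z)^2 < z * (2 + z) := by nlinarith
    have hlog : log ((x + z)^2) < log (z * (2 + z)) :=
      log_lt_log (by positivity) hlt
    rw [hgval z hz0]; linarith
  have hgneg : ∀ z : ℝ, 0 < z → z < y₀ →
      (1/2) * log (1 + z/2) - (1/2) * log (z/2) - log (x + z) + log z < 0 := by
    intro z hz0 hz
    have hkey : z * (2 - 2 * x) < x ^ 2 := (lt_div_iff₀ h2x).mp hz
    have hlt : z * (2 + z) < (x + z)^2 := by nlinarith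
    have hlog : log (z * (2 + z)) < log ((x + z)^2) :=
      log_lt_log (by positivity) hlt
    rw [hgval z hz0]; linarith
  constructor
  · intro y hy hne
    have hy0 : 0 < y := hy
    rcases lt_or_gt_of_ne hne with h | h
    · -- y < y₀ : f strictly antitone on [y, y₀]
      have hanti : StrictAntiOn f (Set.Icc y y₀) := by
        apply strictAntiOn_of_deriv_neg (convex_Icc y y₀)
        · intro z hz
          exact (hderiv z (lt_of_lt_of_le hy0 hz.1)).continuousAt.continuousWithinAt
        · intro z hz
          rw [interior_Icc] at hz
          rw [(hderiv z (lt_trans hy0 hz.1)).deriv]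
          exact hgneg z (lt_trans hy0 hz.1) hz.2
      exact hanti ⟨le_refl y, le_of_lt h⟩ ⟨le_of_lt h, le_refl y₀⟩ h
    · -- y₀ < y : f strictly monotone on [y₀, y]
      have hmono : StrictMonoOn f (Set.Icc y₀ y) := by
        apply strictMonoOn_of_deriv_pos (convex_Icc y₀ y)
        · intro z hz
          exact (hderiv z (lt_of_lt_of_le hy₀ hz.1)).continuousAt.continuousWithinAt
        · intro z hz
          rw [interior_Icc] at hz
          rw [(hderiv z (lt_trans hy₀ hz.1)).deriv]
          exact hgpos z hz.1
      exact hmono ⟨le_refl y₀, le_of_lt h⟩ ⟨le_of_lt h, le_refl y⟩ h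
  · -- value at the minimizer
    have e1 : 1 + y₀ / 2 = (2 - x)^2 / (4 * (1 - x)) := by
      rw [hy₀def]; field_simp; ring
    have e2 : y₀ / 2 = x^2 / (4 * (1 - x)) := by
      rw [hy₀def]; field_simp; ring
    have e3 : x + y₀ = x * (2 - x) / (2 * (1 - x)) := by
      rw [hy₀def]; field_simp; ring
    have e4 : y₀ = x^2 / (2 * (1 - x)) := by
      rw [hy₀def]; field_simp
    have l4 : log (4 * (1 - x)) = 2 * log 2 + log (1 - x) := by
      rw [log_mul (by norm_num) (ne_of_gt h1x),
        show (4:ℝ) = 2^2 by norm_num, log_pow]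
      push_cast; ring
    have l2 : log (2 * (1 - x)) = log 2 + log (1 - x) :=
      log_mul (by norm_num) (ne_of_gt h1x)
    have hA : log (1 + y₀ / 2) = 2 * log (2 - x) - (2 * log 2 + log (1 - x)) := by
      rw [e1, log_div (by positivity) (by positivity), log_pow, l4]
      push_cast; ring
    have hB : log (y₀ / 2) = 2 * log x - (2 * log 2 + log (1 - x)) := by
      rw [e2, log_div (by positivity) (by positivity), log_pow, l4]
      push_cast; ring
    have hC : log (x + y₀) = log x + log (2 - x) - (log 2 + log (1 - x)) := by
      rw [e3, log_div (by positivity) (by positivity),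
        log_mul (ne_of_gt hx0) (ne_of_gt h2mx), l2]
    have hD : log y₀ = 2 * log x - (log 2 + log (1 - x)) := by
      rw [e4, log_div (by positivity) (by positivity), log_pow, l2]
      push_cast; ring
    rw [hA, hB, hC, hD, e1, e2, e3, e4]
    field_simp
    ring
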